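/- Let X be an exterior space such that for every E ∈ ε(X) there is E' ∈ ε(X) with E' ⊂ E and the image of π₀(E') → π₀(E) finite. Then L(Č₀(X)) is compact. If in addition, for every E ∈ ε(X), the set X ∖ (∪_{C ∈ η₀,E(Ě(X))} C) is compact, then Č₀(X) is compact. -/

import Mathlib

open Set Topology Filter

universe u v

/-- An externology on a topological space: a nonempty family of open subsets closed under
finite intersections and under open supersets. -/
structure Externology (X : Type u) [TopologicalSpace X] where
  sets : Set (Set X)
  nonempty' : sets.Nonempty
  isOpen' : ∀ E ∈ sets, IsOpen E
  inter' : ∀ E ∈ sets, ∀ F ∈ sets, E ∩ F ∈ sets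
  superset' : ∀ E ∈ sets, ∀ U : Set X, IsOpen U → E ⊆ U → U ∈ sets

variable {X : Type u} {Y : Type v} [TopologicalSpace X] [TopologicalSpace Y]

/-- The limit space `L(X)` of an exterior space: the intersection of all exterior open sets. -/
def Elimit (ε : Externology X) : Set X := ⋂₀ ε.sets

/-- `V` is a `q₀`-saturated open subset of `E`: an open subset of `E` which is a union of
path-components of `E`. -/
def IsQSatOpen (E V : Set X) : Prop :=
  V ⊆ E ∧ IsOpen V ∧ ∀ x ∈ V, pathComponentIn E x ⊆ V

/-- An end point of an exterior space: a compatible choice of a path-component of each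
exterior open subset. -/
structure EndPt (ε : Externology X) where
  comp : Set X → Set X
  isComp' : ∀ E ∈ ε.sets, ∃ x ∈ E, comp E = pathComponentIn E x
  mono' : ∀ E ∈ ε.sets, ∀ F ∈ ε.sets, E ⊆ F → comp E ⊆ comp F

/-- The inverse limit topology on the end space. -/
instance EndPt.instTopologicalSpace (ε : Externology X) : TopologicalSpace (EndPt ε) :=
  .generateFrom {S | ∃ E ∈ ε.sets, ∃ V : Set X, IsQSatOpen E V ∧
    S = {a : EndPt ε | a.comp E ⊆ V}}

/-- The canonical map `e₀ : L(X) → Ě(X)` sending a point of the limit space to the family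
of its path-components. -/
def endOf (ε : Externology X) (x : Elimit ε) : EndPt ε where
  comp E := pathComponentIn E (x : X)
  isComp' E hE := ⟨(x : X), x.2 E hE, rfl⟩
  mono' _E _hE _F _hF h := pathComponentIn_mono h

/-- The gluing relation of the push-out `X ∪_{L(X)} Ě(X)`. -/
inductive CompletionRel (ε : Externology X) : X ⊕ EndPt ε → X ⊕ EndPt ε → Prop
  | glue (x : Elimit ε) : CompletionRel ε (Sum.inl (x : X)) (Sum.inr (endOf ε x))

/-- The underlying set of the completion: the push-out `X ∪_{L(X)} Ě(X)`. -/
def CompletionPts (ε : Externology X) : Type u := Quot (CompletionRel ε)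

/-- The canonical map `p₀ : X → X ∪_{L(X)} Ě(X)`. -/
def p0 (ε : Externology X) : X → CompletionPts ε := fun x => Quot.mk _ (Sum.inl x)

/-- The canonical map `incl₀ : Ě(X) → X ∪_{L(X)} Ě(X)`. -/
def incl0 (ε : Externology X) : EndPt ε → CompletionPts ε := fun a => Quot.mk _ (Sum.inr a)

/-- The family `𝒢₀` of subsets of the push-out `X ∪_{L(X)} Ě(X)`: `W ∈ 𝒢₀` iff `p₀⁻¹ W` is
open in `X`, `incl₀⁻¹ W` is open in `Ě(X)`, and each end `a ∈ incl₀⁻¹ W` admits `E ∈ ε(X)`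
and an open `G ⊆ π₀(E)` (encoded by the saturated open set `V = q₀⁻¹ G ⊆ E`) with
`a ∈ η₀⁻¹ G ⊆ incl₀⁻¹ W` and `q₀⁻¹ G ⊆ p₀⁻¹ W`. -/
def G0 (ε : Externology X) : Set (Set (CompletionPts ε)) :=
  {W | IsOpen (p0 ε ⁻¹' W) ∧ IsOpen {a : EndPt ε | incl0 ε a ∈ W} ∧
    ∀ a : EndPt ε, incl0 ε a ∈ W →
      ∃ E ∈ ε.sets, ∃ V : Set X, IsQSatOpen E V ∧ a.comp E ⊆ V ∧
        (∀ b : EndPt ε, b.comp E ⊆ V → incl0 ε b ∈ W) ∧ ∀ x ∈ V, p0 ε x ∈ W}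

/-- The topology `𝒢₀` on the completion. -/
instance CompletionPts.instTopologicalSpace (ε : Externology X) :
    TopologicalSpace (CompletionPts ε) := .generateFrom (G0 ε)

/-- The basic exterior subset `W₀(E) = p₀(E) ∪ incl₀(Ě(X))` of the completion. -/
def W0 (ε : Externology X) (E : Set X) : Set (CompletionPts ε) :=
  p0 ε '' E ∪ Set.range (incl0 ε)

lemma W0_mono (ε : Externology X) {E F : Set X} (h : E ⊆ F) : W0 ε E ⊆ W0 ε F :=
  union_subset_union_left _ (image_mono h)

/-- The externology of the completion `Č₀(X)`, with base `{W₀(E) | E ∈ ε(X)}`. -/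
def completionExternology (ε : Externology X) : Externology (CompletionPts ε) where
  sets := {U | IsOpen U ∧ ∃ E ∈ ε.sets, W0 ε E ⊆ U}
  nonempty' := by
    obtain ⟨E, hE⟩ := ε.nonempty'
    exact ⟨univ, isOpen_univ, E, hE, subset_univ _⟩
  isOpen' := fun U hU => hU.1
  inter' := by
    rintro U ⟨hUo, E, hE, hEU⟩ V ⟨hVo, F, hF, hFV⟩
    refine ⟨hUo.inter hVo, E ∩ F, ε.inter' E hE F hF, ?_⟩
    exact subset_inter ((W0_mono ε inter_subset_left).trans hEU)
      ((W0_mono ε inter_subset_right).trans hFV)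
  superset' := by
    rintro U ⟨hUo, E, hE, hEU⟩ V hVo hUV
    exact ⟨hVo, E, hE, hEU.trans hUV⟩

/-- An exterior map between exterior spaces. -/
def IsExteriorMap (εX : Externology X) (εY : Externology Y) (f : X → Y) : Prop :=
  Continuous f ∧ ∀ E ∈ εY.sets, f ⁻¹' E ∈ εX.sets

/-- An isomorphism of exterior spaces. -/
def IsExteriorIso (εX : Externology X) (εY : Externology Y) (f : X → Y) : Prop :=
  IsExteriorMap εX εY f ∧ ∃ g : Y → X, IsExteriorMap εY εX g ∧ g ∘ f = id ∧ f ∘ g = id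

/-- An exterior space is `Č₀`-complete if the canonical map `p₀ : X → Č₀(X)` is an
isomorphism of exterior spaces. -/
def C0Complete (ε : Externology X) : Prop :=
  IsExteriorIso ε (completionExternology ε) (p0 ε)

/-- A `π₀`-`ε(X)`-net: a net eventually contained in a single path-component of every
exterior open set. -/
def IsPi0Net {D : Type*} [Preorder D] (ε : Externology X) (u : D → X) : Prop :=
  ∀ E ∈ ε.sets, ∃ C : Set X, (∃ y ∈ E, C = pathComponentIn E y) ∧ ∀ᶠ δ in atTop, u δ ∈ C

/-- The `r`-exterior externology of a flow: open sets absorbing every positive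
semi-trajectory. -/
def rExt (φ : Flow ℝ X) : Externology X where
  sets := {N | IsOpen N ∧ ∀ x : X, ∃ r₀ : ℝ, ∀ t : ℝ, r₀ < t → φ t x ∈ N}
  nonempty' := ⟨univ, isOpen_univ, fun _ => ⟨0, fun _ _ => mem_univ _⟩⟩
  isOpen' := fun _ hN => hN.1
  inter' := by
    rintro N ⟨hNo, hN⟩ M ⟨hMo, hM⟩
    refine ⟨hNo.inter hMo, fun x => ?_⟩
    obtain ⟨r, hr⟩ := hN x
    obtain ⟨s, hs⟩ := hM x
    exact ⟨max r s, fun t ht =>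
      ⟨hr t ((le_max_left r s).trans_lt ht), hs t ((le_max_right r s).trans_lt ht)⟩⟩
  superset' := by
    rintro N ⟨_, hN⟩ U hUo hNU
    exact ⟨hUo, fun x => (hN x).imp fun r h t ht => hNU (h t ht)⟩

/-- The `ω^r`-limit set of a point for a flow. -/
def omegaR (φ : Flow ℝ X) (x : X) : Set X :=
  ⋂ t : ℝ, closure ((fun s : ℝ => φ s x) '' Ici t)

/-- The set of critical (rest) points of a flow. -/
def criticalSet (φ : Flow ℝ X) : Set X := {x | ∀ r : ℝ, φ r x = x}

/-- The set of periodic points of a flow. -/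
def periodicSet (φ : Flow ℝ X) : Set X := {x | ∃ r : ℝ, r ≠ 0 ∧ φ r x = x}

/-- The global `Ω^r`-limit of a flow. -/
def OmegaRSet (φ : Flow ℝ X) : Set X := ⋃ x : X, omegaR φ x

/-- The compatibility conditions making an exterior space with a flow an `r`-exterior flow:
`φ : ℝ^r ×̄ M_d → M` is exterior and each `F_t : M ×̄ I → M`, `F_t(x,s) = φ(ts, x)`,
is exterior. -/
structure IsRExteriorFlow (ε : Externology X) (φ : Flow ℝ X) : Prop where
  absorb : ∀ E ∈ ε.sets, ∀ x : X, ∃ r₀ : ℝ, ∀ t : ℝ, r₀ < t → φ t x ∈ E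
  homotopyExt : ∀ t : ℝ, ∀ E ∈ ε.sets, ∃ G ∈ ε.sets, ∀ x ∈ G, ∀ s ∈ Icc (0:ℝ) 1,
    φ (t * s) x ∈ E

section Aux

open TopologicalSpace

variable {X : Type u} [TopologicalSpace X]

lemma EndPt.comp_subset {ε : Externology X} (a : EndPt ε) {E : Set X} (hE : E ∈ ε.sets) :
    a.comp E ⊆ E := by
  obtain ⟨x, _, hcomp⟩ := a.isComp' E hE
  rw [hcomp]; exact pathComponentIn_subset

lemma EndPt.comp_eq_of_mem {ε : Externology X} (a : EndPt ε) {E : Set X} (hE : E ∈ ε.sets)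
    {x : X} (hx : x ∈ a.comp E) : a.comp E = pathComponentIn E x := by
  obtain ⟨y, _, hcomp⟩ := a.isComp' E hE
  rw [hcomp] at hx ⊢
  exact (pathComponentIn_congr hx).symm

/-- If `E' ⊆ E` are exterior, the `E`-component of any end is represented by a point of `E'`. -/
lemma EndPt.comp_repr {ε : Externology X} (a : EndPt ε) {E E' : Set X} (hE : E ∈ ε.sets)
    (hE' : E' ∈ ε.sets) (hsub : E' ⊆ E) : ∃ x ∈ E', a.comp E = pathComponentIn E x := by
  obtain ⟨y, hy, hcomp⟩ := a.isComp' E' hE'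
  have hy' : y ∈ a.comp E' := by rw [hcomp]; exact mem_pathComponentIn_self hy
  have hy'' : y ∈ a.comp E := a.mono' E' hE' E hE hsub hy'
  exact ⟨y, hy, a.comp_eq_of_mem hE hy''⟩

/-- Generic convergence criterion for a topology generated from a family. -/
lemma mem_filter_of_generateOpen {α : Type*} {g : Set (Set α)} {f : Filter α} {z : α}
    (H : ∀ W ∈ g, z ∈ W → W ∈ f) {s : Set α} (hs : GenerateOpen g s) : z ∈ s → s ∈ f := by
  induction hs with
  | basic W hW => exact H W hW
  | univ => exact fun _ => univ_mem
  | inter s t _ _ ihs iht => exact fun hz => inter_mem (ihs hz.1) (iht hz.2)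
  | sUnion S _ ih =>
    exact fun hz => by
      obtain ⟨t, htS, hzt⟩ := hz
      exact mem_of_superset (ih t htS hzt) (subset_sUnion_of_mem htS)

lemma le_nhds_completion (ε : Externology X) {f : Filter (CompletionPts ε)}
    {z : CompletionPts ε} (H : ∀ W ∈ G0 ε, z ∈ W → W ∈ f) : f ≤ 𝓝 z :=
  le_nhds_iff.2 fun _s hz hs => mem_filter_of_generateOpen H hs hz

lemma le_nhds_endPt (ε : Externology X) {f : Filter (EndPt ε)} {b : EndPt ε}
    (H : ∀ S ∈ {S | ∃ E ∈ ε.sets, ∃ V : Set X, IsQSatOpen E V ∧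
      S = {a : EndPt ε | a.comp E ⊆ V}}, b ∈ S → S ∈ f) : f ≤ 𝓝 b :=
  le_nhds_iff.2 fun _s hz hs => mem_filter_of_generateOpen H hs hz

lemma continuous_p0 (ε : Externology X) : Continuous (p0 ε) :=
  continuous_generateFrom_iff.2 fun _W hW => hW.1

lemma continuous_incl0 (ε : Externology X) : Continuous (incl0 ε) :=
  continuous_generateFrom_iff.2 fun _W hW => hW.2.1

/-- The end space is compact under the finiteness hypothesis. -/
lemma endPt_compactSpace (ε : Externology X)
    (h : ∀ E ∈ ε.sets, ∃ E' ∈ ε.sets, E' ⊆ E ∧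
      Set.Finite {C : Set X | ∃ x ∈ E', C = pathComponentIn E x}) :
    CompactSpace (EndPt ε) := by
  classical
  refine ⟨isCompact_iff_ultrafilter_le_nhds.2 fun 𝒰 _ => ?_⟩
  have key : ∀ E : Set X, ∃ C : Set X, E ∈ ε.sets →
      (∃ x ∈ E, C = pathComponentIn E x) ∧ {a : EndPt ε | a.comp E = C} ∈ 𝒰 := by
    intro E
    by_cases hE : E ∈ ε.sets
    · obtain ⟨E', hE', hsub, hfin⟩ := h E hE
      have hcover : (⋃ C ∈ {C : Set X | ∃ x ∈ E', C = pathComponentIn E x},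
          {a : EndPt ε | a.comp E = C}) ∈ 𝒰 := by
        have : (⋃ C ∈ {C : Set X | ∃ x ∈ E', C = pathComponentIn E x},
            {a : EndPt ε | a.comp E = C}) = univ := by
          rw [eq_univ_iff_forall]
          intro a
          obtain ⟨x, hx, hax⟩ := a.comp_repr hE hE' hsub
          exact mem_iUnion₂.2 ⟨pathComponentIn E x, ⟨x, hx, rfl⟩, hax⟩
        rw [this]; exact univ_mem
      obtain ⟨C, hCS, hCU⟩ := (Ultrafilter.finite_biUnion_mem_iff hfin).1 hcover
      obtain ⟨x, hx, rfl⟩ := hCS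
      exact ⟨pathComponentIn E x, fun _ => ⟨⟨x, hsub hx, rfl⟩, hCU⟩⟩
    · exact ⟨∅, fun hE' => absurd hE' hE⟩
  choose C hC using key
  have hne : 𝒰.1.NeBot := 𝒰.neBot'
  refine ⟨⟨fun E => if hE : E ∈ ε.sets then C E else E, ?_, ?_⟩, mem_univ _, ?_⟩
  · intro E hE
    simp only [dif_pos hE]
    exact (hC E hE).1
  · intro E hE F hF hEF
    simp only [dif_pos hE, dif_pos hF]
    obtain ⟨a, haE, haF⟩ := 𝒰.nonempty_of_mem (inter_mem (hC E hE).2 (hC F hF).2)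
    rw [← haE, ← haF]
    exact a.mono' E hE F hF hEF
  · refine le_nhds_endPt ε ?_
    rintro S ⟨E, hE, V, _hV, rfl⟩ hbS
    simp only [mem_setOf_eq, dif_pos hE] at hbS
    refine mem_of_superset (hC E hE).2 fun a (ha : a.comp E = C E) => ?_
    simp only [mem_setOf_eq, ha]
    exact hbS

/-- The invariant used to compute preimages of `W0` under `p0`. -/
def inW0 (ε : Externology X) (E : Set X) : CompletionPts ε → Prop :=
  Quot.lift (Sum.elim (fun y => y ∈ E ∨ y ∈ Elimit ε) (fun _ => True)) (by
    rintro _ _ ⟨x⟩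
    exact eq_true (Or.inr x.2))

lemma p0_preimage_W0 (ε : Externology X) {E : Set X} (hE : E ∈ ε.sets) :
    p0 ε ⁻¹' W0 ε E = E := by
  ext x
  constructor
  · rintro (⟨y, hy, hyx⟩ | ⟨a, ha⟩)
    · have hcongr := congrArg (inW0 ε E) hyx
      have h1 : (y ∈ E ∨ y ∈ Elimit ε) = (x ∈ E ∨ x ∈ Elimit ε) := hcongr
      have hx : x ∈ E ∨ x ∈ Elimit ε := h1 ▸ (Or.inl hy : y ∈ E ∨ y ∈ Elimit ε)
      exact hx.elim id fun hL => hL E hE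
    · have hcongr := congrArg (inW0 ε E) ha
      have h1 : True = (x ∈ E ∨ x ∈ Elimit ε) := hcongr
      have hx : x ∈ E ∨ x ∈ Elimit ε := h1 ▸ trivial
      exact hx.elim id fun hL => hL E hE
  · exact fun hx => Or.inl ⟨x, hx, rfl⟩

lemma W0_mem_G0 (ε : Externology X) {E : Set X} (hE : E ∈ ε.sets) : W0 ε E ∈ G0 ε := by
  refine ⟨?_, ?_, ?_⟩
  · rw [p0_preimage_W0 ε hE]; exact ε.isOpen' E hE
  · have : {a : EndPt ε | incl0 ε a ∈ W0 ε E} = univ :=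
      eq_univ_of_forall fun a => Or.inr (mem_range_self a)
    rw [this]; exact isOpen_univ
  · intro a _
    exact ⟨E, hE, E, ⟨Subset.rfl, ε.isOpen' E hE, fun _ _ => pathComponentIn_subset⟩,
      a.comp_subset hE, fun b _ => Or.inr (mem_range_self b),
      fun x hx => Or.inl ⟨x, hx, rfl⟩⟩

lemma elimit_completion (ε : Externology X) :
    Elimit (completionExternology ε) = range (incl0 ε) := by
  apply Subset.antisymm
  · intro z hz
    obtain ⟨w, rfl⟩ := Quot.exists_rep z
    cases w with
    | inr a => exact ⟨a, rfl⟩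
    | inl x =>
      by_cases hx : x ∈ Elimit ε
      · exact ⟨endOf ε ⟨x, hx⟩, (Quot.sound (CompletionRel.glue ⟨x, hx⟩)).symm⟩
      · obtain ⟨E₀, hE₀, hxE₀⟩ : ∃ E ∈ ε.sets, x ∉ E := by
          by_contra hcon
          push_neg at hcon
          exact hx fun E hE => hcon E hE
        have hW : W0 ε E₀ ∈ (completionExternology ε).sets :=
          ⟨TopologicalSpace.GenerateOpen.basic _ (W0_mem_G0 ε hE₀), E₀, hE₀, Subset.rfl⟩
        have hmem : x ∈ p0 ε ⁻¹' W0 ε E₀ := hz _ hW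
        rw [p0_preimage_W0 ε hE₀] at hmem
        exact absurd hmem hxE₀
  · rintro _ ⟨a, rfl⟩
    intro U hU
    obtain ⟨_, E, hE, hWU⟩ := hU
    exact hWU (Or.inr (mem_range_self a))

/-- Push an ultrafilter forward along a map whose range belongs to it. -/
lemma exists_ultrafilter_map {α : Type*} {β : Type*} (m : α → β) (u : Ultrafilter β)
    (hr : range m ∈ u) : ∃ v : Ultrafilter α, (u : Filter β) = Filter.map m ↑v := by
  have hne : (Filter.comap m ↑u).NeBot := comap_neBot_iff.2 fun t ht => by
    obtain ⟨y, hyt, a, rfl⟩ := u.nonempty_of_mem (inter_mem ht hr)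
    exact ⟨a, hyt⟩
  refine ⟨Ultrafilter.of (Filter.comap m ↑u), ?_⟩
  have h1 : Filter.map m ↑(Ultrafilter.of (Filter.comap m ↑u)) ≤ ↑u :=
    le_trans (map_mono (Ultrafilter.of_le _)) map_comap_le
  have h2 := Ultrafilter.unique u (g := Filter.map m ↑(Ultrafilter.of (Filter.comap m ↑u))) h1
  exact h2.symm

end Aux

/-- if every exterior set `E` contains an exterior set `E'` with finite image
`π₀(E') → π₀(E)`, then `L(Č₀(X))` is compact; if moreover for every `E` the complement of
the union of the path-components of `E` hit by ends is compact, then `Č₀(X)` is compact. -/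


theorem stmt_14 (ε : Externology X)
    (h : ∀ E ∈ ε.sets, ∃ E' ∈ ε.sets, E' ⊆ E ∧
      Set.Finite {C : Set X | ∃ x ∈ E', C = pathComponentIn E x}) :
    IsCompact (Elimit (completionExternology ε)) ∧
      ((∀ E ∈ ε.sets, IsCompact ((⋃ a : EndPt ε, a.comp E)ᶜ)) →
        CompactSpace (CompletionPts ε)) := by
  classical
  haveI := endPt_compactSpace ε h
  constructor
  · rw [elimit_completion ε]
    exact isCompact_range (continuous_incl0 ε)
  · intro hK
    refine ⟨isCompact_iff_ultrafilter_le_nhds.2 fun u _ => ?_⟩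
    have huniv : range (p0 ε) ∪ range (incl0 ε) ∈ u := by
      have : range (p0 ε) ∪ range (incl0 ε) = univ := by
        rw [eq_univ_iff_forall]
        intro z
        obtain ⟨w, rfl⟩ := Quot.exists_rep z
        cases w with
        | inl x => exact Or.inl ⟨x, rfl⟩
        | inr a => exact Or.inr ⟨a, rfl⟩
      rw [this]; exact univ_mem
    rcases Ultrafilter.union_mem_iff.1 huniv with hp | hi
    · -- the ultrafilter concentrates on the image of X
      obtain ⟨v, hv⟩ := exists_ultrafilter_map (p0 ε) u hp
      by_cases hall : ∀ E ∈ ε.sets, (⋃ a : EndPt ε, a.comp E) ∈ v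
      · -- build a limit end
        have key : ∀ E : Set X, ∃ C : Set X, E ∈ ε.sets →
            (∃ x ∈ E, C = pathComponentIn E x) ∧ C ∈ v := by
          intro E
          by_cases hE : E ∈ ε.sets
          · obtain ⟨E', hE', hsub, hfin⟩ := h E hE
            have hsU : ⋃₀ {C : Set X | ∃ x ∈ E', C = pathComponentIn E x} ∈ v := by
              refine mem_of_superset (hall E' hE') ?_
              intro x hx
              obtain ⟨a, hxa⟩ := mem_iUnion.1 hx
              have hxE' : x ∈ E' := a.comp_subset hE' hxa
              exact ⟨pathComponentIn E x, ⟨x, hxE', rfl⟩,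
                mem_pathComponentIn_self (hsub hxE')⟩
            obtain ⟨C, hCS, hCv⟩ := (Ultrafilter.finite_sUnion_mem_iff hfin).1 hsU
            obtain ⟨x, hx, rfl⟩ := hCS
            exact ⟨pathComponentIn E x, fun _ => ⟨⟨x, hsub hx, rfl⟩, hCv⟩⟩
          · exact ⟨∅, fun hE' => absurd hE' hE⟩
        choose C hC using key
        have hvne : v.1.NeBot := v.neBot'
        refine ⟨incl0 ε ⟨fun E => if hE : E ∈ ε.sets then C E else E, ?_, ?_⟩, mem_univ _, ?_⟩
        · intro E hE
          simp only [dif_pos hE]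
          exact (hC E hE).1
        · intro E hE F hF hEF
          simp only [dif_pos hE, dif_pos hF]
          obtain ⟨x, hxE, hxF⟩ := v.nonempty_of_mem (inter_mem (hC E hE).2 (hC F hF).2)
          obtain ⟨y, _, hyE⟩ := (hC E hE).1
          obtain ⟨z', _, hzF⟩ := (hC F hF).1
          have h1 : C E = pathComponentIn E x := by
            rw [hyE] at hxE ⊢
            exact (pathComponentIn_congr hxE).symm
          have h2 : C F = pathComponentIn F x := by
            rw [hzF] at hxF ⊢
            exact (pathComponentIn_congr hxF).symm
          rw [h1, h2]
          exact pathComponentIn_mono hEF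
        · rw [hv]
          refine le_nhds_completion ε ?_
          intro W hW hbW
          obtain ⟨E, hE, V, _hV, hbV, _hbW', hVW⟩ := hW.2.2 _ hbW
          simp only [dif_pos hE] at hbV
          exact mem_map.2 (mem_of_superset (hC E hE).2 fun x hx => hVW x (hbV hx))
      · -- the ultrafilter concentrates on a compact part of X
        push_neg at hall
        obtain ⟨E, hE, hEv⟩ := hall
        have hcv : (⋃ a : EndPt ε, a.comp E)ᶜ ∈ v :=
          Ultrafilter.compl_mem_iff_notMem.2 hEv
        obtain ⟨x, _, hx⟩ := (hK E hE).ultrafilter_le_nhds' v hcv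
        refine ⟨p0 ε x, mem_univ _, ?_⟩
        rw [hv]
        exact (map_mono hx).trans ((continuous_p0 ε).tendsto x)
    · -- the ultrafilter concentrates on the ends
      obtain ⟨v, hv⟩ := exists_ultrafilter_map (incl0 ε) u hi
      obtain ⟨b, _, hb⟩ := isCompact_univ.ultrafilter_le_nhds v
        (by simp)
      refine ⟨incl0 ε b, mem_univ _, ?_⟩
      rw [hv]
      exact (map_mono hb).trans ((continuous_incl0 ε).tendsto b)
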